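/- Let b∈A and ψ₁,ψ₂,ψ₃∈F with |ψ₃|≥1, and fix a choice of sign ±. Then the following identities hold in U(sl₂⊗A): (i) ψ₂(b)·D^±(ψ₁,ψ₂,ψ₃) = Σ_{φ₁∈F(ψ₁)}Σ_{φ₂∈F(ψ₂)}Σ_{c∈supp ψ₃} φ₂(b)·D^±(φ₁,φ₂,χ_c)·D^±(ψ₁−φ₁,ψ₂−φ₂,ψ₃−χ_c); and (ii) (|ψ₂|+|ψ₃|)·D^±(ψ₁,ψ₂,ψ₃) = Σ_{φ₁∈F(ψ₁)}Σ_{φ₂∈F(ψ₂)}Σ_{c∈supp ψ₃} (|φ₁|+1)·D^±(φ₁,φ₂,χ_c)·D^±(ψ₁−φ₁,ψ₂−φ₂,ψ₃−χ_c). -/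

import Mathlib

open scoped TensorProduct
open Finsupp
open scoped Classical

noncomputable section

namespace MapAlgebra

/-- the divided power `u^{(r)} = u^r / r!` in a `ℂ`-algebra. -/
def dp {S : Type*} [Ring S] [Algebra ℂ S] (u : S) (r : ℕ) : S :=
  (r.factorial : ℂ)⁻¹ • u ^ r

variable {A : Type*} [CommRing A] [Algebra ℂ A]

/-- `|ψ| = Σ_a ψ(a)` for a multiset `ψ` of elements of `A`. -/
def wt (ψ : A →₀ ℕ) : ℕ := ψ.sum fun _ n => n

/-- `π(ψ) = ∏_a a^{ψ(a)}`. -/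
def piF (ψ : A →₀ ℕ) : A := ψ.prod fun a n => a ^ n

/-- `m(ψ) = |ψ|! / ∏_a ψ(a)!`. -/
def mF (ψ : A →₀ ℕ) : ℕ := Finsupp.multinomial ψ

variable {L : Type*} [LieRing L] [LieAlgebra ℂ L]

instance : LieAlgebra ℂ (A ⊗[ℂ] L) where
  lie_smul c x y := by
    rw [← algebraMap_smul A c y, lie_smul, algebraMap_smul]

/-- The universal enveloping algebra `U(L ⊗ A)` of the map algebra `L ⊗ A`
(realized as `A ⊗[ℂ] L` with bracket `[a ⊗ z, b ⊗ z'] = ab ⊗ [z,z']`). -/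
abbrev UEA (A : Type*) [CommRing A] [Algebra ℂ A]
    (L : Type*) [LieRing L] [LieAlgebra ℂ L] : Type _ :=
  UniversalEnvelopingAlgebra ℂ (A ⊗[ℂ] L)

/-- The element `v ⊗ a` of the map algebra, viewed inside `U(L ⊗ A)`. -/
def el (a : A) (v : L) : UEA A L :=
  UniversalEnvelopingAlgebra.ι ℂ (a ⊗ₜ[ℂ] v)

lemma commute_el (a b : A) (v : L) : Commute (el a v : UEA A L) (el b v) := by
  letI : LieRing (UEA A L) := LieRing.ofAssociativeRing
  have h := (UniversalEnvelopingAlgebra.ι ℂ).map_lie (a ⊗ₜ[ℂ] v) (b ⊗ₜ[ℂ] v)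
  rw [LieAlgebra.ExtendScalars.bracket_tmul, lie_self, TensorProduct.tmul_zero, map_zero,
    Ring.lie_def] at h
  exact (sub_eq_zero.mp h.symm)

lemma commute_dp {S : Type*} [Ring S] [Algebra ℂ S] {u w : S} (h : Commute u w)
    (r s : ℕ) : Commute (dp u r) (dp w s) :=
  ((h.pow_pow r s).smul_left _).smul_right _

/-- `x^±(ψ) = ∏_a (x^± ⊗ a)^{(ψ(a))}` (generic in the element `v` of `L`);
the factors pairwise commute, so the product is unambiguous. -/
def xProd (v : L) (ψ : A →₀ ℕ) : UEA A L :=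
  ψ.support.noncommProd (fun a => dp (el a v) (ψ a))
    (fun a _ b _ _ => commute_dp (commute_el a b v) _ _)

/-- the predicate characterizing the recursively defined family
`p : F × F → U(L ⊗ A)` (relative to a choice `v` playing the role of `h`). -/
def IsP (v : L) (p : (A →₀ ℕ) → (A →₀ ℕ) → UEA A L) : Prop :=
  p 0 0 = 1 ∧
  (∀ φ χ, wt φ ≠ wt χ → p φ χ = 0) ∧
  (∀ φ χ, φ ≠ 0 → χ ≠ 0 → wt φ = wt χ →
    p φ χ = -((wt φ : ℂ)⁻¹) •
      ∑ ψ₁ ∈ (Finset.Iic φ).erase 0, ∑ ψ₂ ∈ (Finset.Iic χ).erase 0,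
        ((mF ψ₁ * mF ψ₂ : ℕ) : ℂ) • (el (piF ψ₁ * piF ψ₂) v * p (φ - ψ₁) (χ - ψ₂)))

/-- `p(χ) = p(χ, |χ|·χ₁)`. -/
def pOne (p : (A →₀ ℕ) → (A →₀ ℕ) → UEA A L) (χ : A →₀ ℕ) : UEA A L :=
  p χ (Finsupp.single (1 : A) (wt χ))

/-- the predicate characterizing the recursively defined family
`D^± : F³ → U(L ⊗ A)` (relative to a choice `v` playing the role of `x^±`). -/
def IsD (v : L) (D : (A →₀ ℕ) → (A →₀ ℕ) → (A →₀ ℕ) → UEA A L) : Prop :=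
  (D 0 0 0 = 1) ∧
  (∀ ψ₁ ψ₂ : A →₀ ℕ, ¬(ψ₁ = 0 ∧ ψ₂ = 0) → D ψ₁ ψ₂ 0 = 0) ∧
  (∀ (ψ₁ ψ₂ : A →₀ ℕ) (b : A), D ψ₁ ψ₂ (Finsupp.single b 1) =
      if wt ψ₁ = wt ψ₂ then ((mF ψ₁ * mF ψ₂ : ℕ) : ℂ) • el (b * (piF ψ₁ * piF ψ₂)) v
      else 0) ∧
  (∀ ψ₁ ψ₂ ψ₃ : A →₀ ℕ, 2 ≤ wt ψ₃ →
    D ψ₁ ψ₂ ψ₃ = (wt ψ₃ : ℂ)⁻¹ •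
      ∑ φ₁ ∈ Finset.Iic ψ₁, ∑ φ₂ ∈ Finset.Iic ψ₂, ∑ b ∈ ψ₃.support,
        D φ₁ φ₂ (Finsupp.single b 1) *
          D (ψ₁ - φ₁) (ψ₂ - φ₂) (ψ₃ - Finsupp.single b 1))

/-- `𝔻(ψ₁,ψ₂,ψ₃) = Σ_{φ₁≤ψ₁} Σ_{φ₂≤ψ₂} p(φ₁,φ₂) D⁺(ψ₁−φ₁,ψ₂−φ₂,ψ₃)`. -/
def DD (p : (A →₀ ℕ) → (A →₀ ℕ) → UEA A L)
    (Dp : (A →₀ ℕ) → (A →₀ ℕ) → (A →₀ ℕ) → UEA A L)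
    (ψ₁ ψ₂ ψ₃ : A →₀ ℕ) : UEA A L :=
  ∑ φ₁ ∈ Finset.Iic ψ₁, ∑ φ₂ ∈ Finset.Iic ψ₂,
    p φ₁ φ₂ * Dp (ψ₁ - φ₁) (ψ₂ - φ₂) ψ₃

/-- the Lie algebra `sl₂` presented by a basis `x⁻ = b 0`, `h = b 1`, `x⁺ = b 2`
with `[h,x^±] = ±2x^±`, `[x⁺,x⁻] = h`. -/
structure Sl2Data (L : Type*) [LieRing L] [LieAlgebra ℂ L] where
  b : Module.Basis (Fin 3) ℂ L
  lie_h_xp : ⁅b 1, b 2⁆ = (2 : ℂ) • b 2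
  lie_h_xm : ⁅b 1, b 0⁆ = (-2 : ℂ) • b 0
  lie_xp_xm : ⁅b 2, b 0⁆ = b 1

/-- `x⁻`. -/
def Sl2Data.xm (S : Sl2Data L) : L := S.b 0
/-- `h`. -/
def Sl2Data.h (S : Sl2Data L) : L := S.b 1
/-- `x⁺`. -/
def Sl2Data.xp (S : Sl2Data L) : L := S.b 2

/-- The data of a root system and Chevalley basis for a (finite-dimensional simple)
complex Lie algebra `g`: a Cartan subalgebra `H`, the roots `R`, the positive roots
`Rpos` enumerated as `β 0, …, β (m-1)`, simple roots `α 0, …, α (n-1)`, root vectors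
`x s γ` (`s = true` for `x_γ⁺`, `s = false` for `x_γ⁻`), coroots, integral Cartan
pairing, and structure constants `±(p+1)`. -/
structure ChevalleyData (g : Type*) [LieRing g] [LieAlgebra ℂ g] where
  n : ℕ
  m : ℕ
  H : LieSubalgebra ℂ g
  cartan : H.IsCartanSubalgebra
  R : Set (Module.Dual ℂ H)
  Rpos : Set (Module.Dual ℂ H)
  β : Fin m → Module.Dual ℂ H
  β_inj : Function.Injective β
  Rpos_eq : Rpos = Set.range β
  α : Fin n → Module.Dual ℂ H
  α_mem : ∀ i, α i ∈ Rpos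
  R_eq : R = Rpos ∪ (fun γ => -γ) '' Rpos
  x : Bool → Module.Dual ℂ H → g
  coroot : Module.Dual ℂ H → H
  chevBasis : Module.Basis ((Fin m × Bool) ⊕ Fin n) ℂ g
  chevBasis_x : ∀ (k : Fin m) (s : Bool), chevBasis (Sum.inl (k, s)) = x s (β k)
  chevBasis_h : ∀ i : Fin n, chevBasis (Sum.inr i) = (coroot (α i) : g)
  rootvec_pos : ∀ γ ∈ Rpos, ∀ t : H, ⁅(t : g), x true γ⁆ = γ t • x true γ
  rootvec_neg : ∀ γ ∈ Rpos, ∀ t : H, ⁅(t : g), x false γ⁆ = -(γ t) • x false γ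
  coroot_def : ∀ γ ∈ Rpos, ⁅x true γ, x false γ⁆ = (coroot γ : g)
  pairing : Module.Dual ℂ H → Module.Dual ℂ H → ℤ
  pairing_eq : ∀ γ ∈ Rpos, ∀ δ ∈ R, δ (coroot γ) = (pairing γ δ : ℂ)
  pairing_self : ∀ γ ∈ Rpos, pairing γ γ = 2
  struct : ∀ γ δ, γ ∈ Rpos → δ ∈ Rpos → γ + δ ∈ R → ∃ (c : ℤ) (pm : ℕ),
    (δ - (pm : ℤ) • γ ∈ R) ∧ (∀ q : ℕ, δ - (q : ℤ) • γ ∈ R → q ≤ pm) ∧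
    (c = pm + 1 ∨ c = -(pm + 1)) ∧
    ⁅x true γ, x true δ⁆ = (c : ℂ) • x true (γ + δ) ∧
    ⁅x false γ, x false δ⁆ = (-c : ℂ) • x false (γ + δ)

/-- `ψ ∈ F(𝔹)`: the multiset `ψ` is supported on the basis `𝔹 = range bA` of `A`. -/
def SuppB {ιA : Type*} (bA : Module.Basis ιA ℂ A) (ψ : A →₀ ℕ) : Prop :=
  ∀ a ∈ ψ.support, a ∈ Set.range bA

variable {g : Type*} [LieRing g] [LieAlgebra ℂ g]

/-- The integral form `U_ℤ(g ⊗ A)`: the `ℤ`-subalgebra of `U(g ⊗ A)` generated by all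
divided powers `(x_α^± ⊗ b)^{(r)}`, `α ∈ R⁺`, `b ∈ 𝔹`, `r ∈ ℕ`. -/
def UZ (C : ChevalleyData g) {ιA : Type*} (bA : Module.Basis ιA ℂ A) : Subalgebra ℤ (UEA A g) :=
  Algebra.adjoin ℤ {u : UEA A g | ∃ (k : Fin C.m) (s : Bool) (i : ιA) (r : ℕ),
    u = dp (el (bA i) (C.x s (C.β k))) r}

/-- `U_ℤ^±(g ⊗ A)` (one sign `s` only). -/
def UZpm (C : ChevalleyData g) {ιA : Type*} (bA : Module.Basis ιA ℂ A) (s : Bool) :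
    Subalgebra ℤ (UEA A g) :=
  Algebra.adjoin ℤ {u : UEA A g | ∃ (k : Fin C.m) (i : ιA) (r : ℕ),
    u = dp (el (bA i) (C.x s (C.β k))) r}


/-- generalized binomial coefficient `C(z,k) = z(z-1)⋯(z-k+1)/k!` (as a complex scalar). -/
def cchoose (z : ℂ) (k : ℕ) : ℂ :=
  (k.factorial : ℂ)⁻¹ * ∏ j ∈ Finset.range k, (z - (j : ℂ))

/-- the (finite) set `P_k(ψ)` of partitions of `ψ` into `k` parts,
i.e. finitely supported `χ : F → ℕ` with `Σ_φ χ(φ)·φ = ψ` and `Σ_φ χ(φ) = k`. -/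
def partitions (ψ : A →₀ ℕ) (k : ℕ) : Finset ((A →₀ ℕ) →₀ ℕ) :=
  (Finset.Iic ((Finset.Iic ψ).sum fun φ => Finsupp.single φ k)).filter
    (fun χ => (χ.sum fun φ c => c • φ) = ψ ∧ (χ.sum fun _ c => c) = k)

/-- the (finite) set `S_k(χ)` of finitely supported `ψ : F → ℕ` with
`Σ_φ ψ(φ)·φ ≤ χ` and `Σ_φ ψ(φ) = k`. -/
def subPartitions (χ : A →₀ ℕ) (k : ℕ) : Finset ((A →₀ ℕ) →₀ ℕ) :=
  (Finset.Iic ((Finset.Iic χ).sum fun φ => Finsupp.single φ k)).filter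
    (fun ψ => (ψ.sum fun φ c => c • φ) ≤ χ ∧ (ψ.sum fun _ c => c) = k)

/-- `U_ℤ^0(g ⊗ A)`: the `ℤ`-subalgebra generated by the `p_i(χ)`, `χ ∈ F(𝔹)`,
where `P i` is the family `p_i` (defined by recursion relative to `h_{α_i}`). -/
def UZ0 (C : ChevalleyData g) {ιA : Type*} (bA : Module.Basis ιA ℂ A)
    (P : Fin C.n → (A →₀ ℕ) → (A →₀ ℕ) → UEA A g) : Subalgebra ℤ (UEA A g) :=
  Algebra.adjoin ℤ {u : UEA A g | ∃ (i : Fin C.n) (χ : A →₀ ℕ), SuppB bA χ ∧ u = pOne (P i) χ}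


section Helpers

lemma wt_add (φ χ : A →₀ ℕ) : wt (φ + χ) = wt φ + wt χ :=
  Finsupp.sum_add_index' (fun _ => rfl) (fun _ _ _ => rfl)

lemma wt_single (a : A) (n : ℕ) : wt (Finsupp.single a n) = n := Finsupp.sum_single_index rfl

@[simp] lemma wt_zero : wt (0 : A →₀ ℕ) = 0 := Finsupp.sum_zero_index

lemma wt_eq_zero {ψ : A →₀ ℕ} : wt ψ = 0 ↔ ψ = 0 := by
  constructor
  · intro h
    ext a
    simp only [Finsupp.coe_zero, Pi.zero_apply]
    by_contra ha
    have hmem : a ∈ ψ.support := Finsupp.mem_support_iff.2 (by simpa using ha)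
    have : ψ a ≤ wt ψ :=
      Finset.single_le_sum (f := fun a => ψ a) (fun _ _ => Nat.zero_le _) hmem
    omega
  · rintro rfl; simp

lemma wt_tsub {φ ψ : A →₀ ℕ} (h : φ ≤ ψ) : wt (ψ - φ) = wt ψ - wt φ := by
  have := wt_add φ (ψ - φ)
  rw [add_tsub_cancel_of_le h] at this
  omega

lemma wt_le {φ ψ : A →₀ ℕ} (h : φ ≤ ψ) : wt φ ≤ wt ψ := by
  have := wt_add φ (ψ - φ); rw [add_tsub_cancel_of_le h] at this; omega

lemma single_le_of_mem {c : A} {ψ : A →₀ ℕ} (hc : c ∈ ψ.support) : Finsupp.single c 1 ≤ ψ :=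
  Finsupp.single_le_iff.2 (Finsupp.mem_support_iff.1 hc).bot_lt

lemma wt_eq_one {ψ : A →₀ ℕ} (h : wt ψ = 1) : ∃ c, ψ = Finsupp.single c 1 := by
  have hne : ψ ≠ 0 := fun h0 => by simp [h0] at h
  obtain ⟨c, hc⟩ := Finsupp.support_nonempty_iff.2 hne
  refine ⟨c, ?_⟩
  have hle := single_le_of_mem hc
  have h0 : wt (ψ - Finsupp.single c 1) = 0 := by rw [wt_tsub hle, wt_single, h]
  exact le_antisymm (tsub_eq_zero_iff_le.1 (wt_eq_zero.1 h0)) hle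

lemma ite_sum_zero {M α : Type*} [AddCommMonoid M] (P : Prop) [Decidable P]
    (s : Finset α) (f : α → M) :
    (if P then ∑ x ∈ s, f x else 0) = ∑ x ∈ s, if P then f x else 0 := by
  split_ifs <;> simp

lemma ite_and3 {M : Type*} (P Q R : Prop) [Decidable P] [Decidable Q] [Decidable R]
    [Decidable (P ∧ Q ∧ R)] (x y : M) :
    (if P then (if Q then (if R then x else y) else y) else y) = if P ∧ Q ∧ R then x else y := by
  split_ifs <;> first | rfl | tauto

lemma sum_Iic_tsub {M : Type*} [AddCommMonoid M] {φ ψ : A →₀ ℕ}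
    [∀ x : A →₀ ℕ, Decidable (φ + x ≤ ψ)] (h : φ ≤ ψ)
    (g : (A →₀ ℕ) → M) :
    ∑ x ∈ Finset.Iic (ψ - φ), g x = ∑ x ∈ Finset.Iic ψ, if φ + x ≤ ψ then g x else 0 := by
  rw [show Finset.Iic (ψ - φ) = (Finset.Iic ψ).filter (fun x => φ + x ≤ ψ) from ?_,
    Finset.sum_filter]
  ext x
  simp only [Finset.mem_Iic, Finset.mem_filter]
  rw [le_tsub_iff_left h]
  exact ⟨fun hx => ⟨le_trans le_add_self hx, hx⟩, fun hx => hx.2⟩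

lemma sum_supp_tsub {M : Type*} [AddCommMonoid M] {c : A} {ψ₃ : A →₀ ℕ}
    [∀ x : A, Decidable (Finsupp.single c 1 + Finsupp.single x 1 ≤ ψ₃)]
    (hc : c ∈ ψ₃.support) (g : A → M) :
    ∑ x ∈ (ψ₃ - Finsupp.single c 1).support, g x =
      ∑ x ∈ ψ₃.support, if Finsupp.single c 1 + Finsupp.single x 1 ≤ ψ₃ then g x else 0 := by
  have key : ∀ x : A, ((ψ₃ - Finsupp.single c 1 : A →₀ ℕ)) x ≠ 0 ↔
      Finsupp.single c 1 + Finsupp.single x 1 ≤ ψ₃ := by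
    intro x
    rw [← Nat.one_le_iff_ne_zero, ← Finsupp.single_le_iff,
      le_tsub_iff_left (single_le_of_mem hc)]
  have hsupp : (ψ₃ - Finsupp.single c 1).support =
      ψ₃.support.filter (fun x => Finsupp.single c 1 + Finsupp.single x 1 ≤ ψ₃) := by
    ext x
    simp only [Finsupp.mem_support_iff, Finset.mem_filter, key]
    refine ⟨fun hx => ⟨?_, hx⟩, fun hx => hx.2⟩
    have h1 : Finsupp.single x 1 ≤ ψ₃ := le_trans le_add_self hx
    have := Finsupp.single_le_iff.1 h1
    omega
  rw [hsupp, Finset.sum_filter]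

lemma swap6 {M α β γ : Type*} [AddCommMonoid M] (s₁ : Finset α) (s₂ : Finset β) (s₃ : Finset γ)
    (p : α → α → Prop) (q : β → β → Prop) (r : γ → γ → Prop)
    [∀ a a', Decidable (p a a')] [∀ b b', Decidable (q b b')] [∀ c c', Decidable (r c c')]
    (hp : ∀ a a', p a a' ↔ p a' a) (hq : ∀ b b', q b b' ↔ q b' b)
    (hr : ∀ c c', r c c' ↔ r c' c)
    (f : α → β → γ → α → β → γ → M) :
    (∑ a ∈ s₁, ∑ b ∈ s₂, ∑ c ∈ s₃, ∑ a' ∈ s₁, ∑ b' ∈ s₂, ∑ c' ∈ s₃,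
      if p a a' ∧ q b b' ∧ r c c' then f a b c a' b' c' else 0)
    = ∑ a ∈ s₁, ∑ b ∈ s₂, ∑ c ∈ s₃, ∑ a' ∈ s₁, ∑ b' ∈ s₂, ∑ c' ∈ s₃,
      if p a a' ∧ q b b' ∧ r c c' then f a' b' c' a b c else 0 := by
  have conv : ∀ g : α → β → γ → α → β → γ → M,
      (∑ a ∈ s₁, ∑ b ∈ s₂, ∑ c ∈ s₃, ∑ a' ∈ s₁, ∑ b' ∈ s₂, ∑ c' ∈ s₃, g a b c a' b' c')
      = ∑ x ∈ s₁ ×ˢ s₂ ×ˢ s₃, ∑ y ∈ s₁ ×ˢ s₂ ×ˢ s₃,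
          g x.1 x.2.1 x.2.2 y.1 y.2.1 y.2.2 := by
    intro g
    simp only [Finset.sum_product]
  rw [conv, conv, Finset.sum_comm]
  refine Finset.sum_congr rfl fun x _ => Finset.sum_congr rfl fun y _ => ?_
  simp only [hp y.1 x.1, hq y.2.1 x.2.1, hr y.2.2 x.2.2]

variable {L : Type*} [LieRing L] [LieAlgebra ℂ L]

lemma triple_convert {M : Type*} [AddCommMonoid M] {ψ₁ ψ₂ ψ₃ a b : A →₀ ℕ} {c : A}
    [∀ x : A →₀ ℕ, Decidable (a + x ≤ ψ₁)] [∀ x : A →₀ ℕ, Decidable (b + x ≤ ψ₂)]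
    [∀ x : A, Decidable (Finsupp.single c 1 + Finsupp.single x 1 ≤ ψ₃)]
    (ha : a ≤ ψ₁) (hb : b ≤ ψ₂) (hc : c ∈ ψ₃.support)
    (g : (A →₀ ℕ) → (A →₀ ℕ) → A → M) :
    (∑ a' ∈ Finset.Iic (ψ₁ - a), ∑ b' ∈ Finset.Iic (ψ₂ - b),
        ∑ c' ∈ (ψ₃ - Finsupp.single c 1).support, g a' b' c')
    = ∑ a' ∈ Finset.Iic ψ₁, ∑ b' ∈ Finset.Iic ψ₂, ∑ c' ∈ ψ₃.support,
        if a + a' ≤ ψ₁ ∧ b + b' ≤ ψ₂ ∧ Finsupp.single c 1 + Finsupp.single c' 1 ≤ ψ₃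
        then g a' b' c' else 0 := by
  rw [sum_Iic_tsub ha]
  refine Finset.sum_congr rfl fun a' _ => ?_
  rw [sum_Iic_tsub hb, ite_sum_zero]
  refine Finset.sum_congr rfl fun b' _ => ?_
  rw [sum_supp_tsub hc, ite_sum_zero, ite_sum_zero]
  refine Finset.sum_congr rfl fun c' _ => ?_
  exact ite_and3 _ _ _ _ _

lemma commD (v : L) (D : (A →₀ ℕ) → (A →₀ ℕ) → (A →₀ ℕ) → UEA A L) (hD : IsD v D)
    (φ₁ φ₂ φ₁' φ₂' : A →₀ ℕ) (c c' : A) :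
    Commute (D φ₁ φ₂ (Finsupp.single c 1)) (D φ₁' φ₂' (Finsupp.single c' 1)) := by
  rw [hD.2.2.1, hD.2.2.1]
  split_ifs
  · exact (((commute_el _ _ v).smul_left _).smul_right _)
  · exact Commute.zero_right _
  · exact Commute.zero_left _
  · exact Commute.zero_left _

lemma rec1 (v : L) (D : (A →₀ ℕ) → (A →₀ ℕ) → (A →₀ ℕ) → UEA A L) (hD : IsD v D)
    (ψ₁ ψ₂ ψ₃ : A →₀ ℕ) (h : 1 ≤ wt ψ₃) :
    (wt ψ₃ : ℂ) • D ψ₁ ψ₂ ψ₃ =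
      ∑ φ₁ ∈ Finset.Iic ψ₁, ∑ φ₂ ∈ Finset.Iic ψ₂, ∑ c ∈ ψ₃.support,
        D φ₁ φ₂ (Finsupp.single c 1) *
          D (ψ₁ - φ₁) (ψ₂ - φ₂) (ψ₃ - Finsupp.single c 1) := by
  rcases le_or_gt 2 (wt ψ₃) with h2 | h2
  · rw [hD.2.2.2 ψ₁ ψ₂ ψ₃ h2, smul_smul, mul_inv_cancel₀, one_smul]
    exact Nat.cast_ne_zero.2 (by omega)
  · have h1 : wt ψ₃ = 1 := by omega
    obtain ⟨c, rfl⟩ := wt_eq_one h1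
    rw [h1, Nat.cast_one, one_smul,
      Finsupp.support_single_ne_zero c one_ne_zero]
    simp only [Finset.sum_singleton, tsub_self]
    rw [Finset.sum_eq_single ψ₁]
    · rw [Finset.sum_eq_single ψ₂]
      · rw [tsub_self, tsub_self, hD.1, mul_one]
      · intro φ₂ h2m h2ne
        have hz : ¬(ψ₁ - ψ₁ = 0 ∧ ψ₂ - φ₂ = 0) := by
          rintro ⟨-, h0⟩
          exact h2ne (le_antisymm (Finset.mem_Iic.1 h2m) (tsub_eq_zero_iff_le.1 h0))
        rw [hD.2.1 _ _ hz, mul_zero]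
      · intro hmem; exact absurd (Finset.mem_Iic.2 le_rfl) hmem
    · intro φ₁ h1m h1ne
      rw [Finset.sum_eq_zero]
      intro φ₂ _
      have hz : ¬(ψ₁ - φ₁ = 0 ∧ ψ₂ - φ₂ = 0) := by
        rintro ⟨h0, -⟩
        exact h1ne (le_antisymm (Finset.mem_Iic.1 h1m) (tsub_eq_zero_iff_le.1 h0))
      rw [hD.2.1 _ _ hz, mul_zero]
    · intro hmem; exact absurd (Finset.mem_Iic.2 le_rfl) hmem

end Helpers


set_option maxHeartbeats 2000000 in
lemma keyIdentity (v : L) (D : (A →₀ ℕ) → (A →₀ ℕ) → (A →₀ ℕ) → UEA A L) (hD : IsD v D)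
    (w : (A →₀ ℕ) → (A →₀ ℕ) → ℕ) (W : (A →₀ ℕ) → (A →₀ ℕ) → (A →₀ ℕ) → ℕ)
    (hW0 : W 0 0 0 = 0)
    (hW : ∀ ψ₁ ψ₂ ψ₃ φ₁ φ₂ : A →₀ ℕ, ∀ c : A, φ₁ ≤ ψ₁ → φ₂ ≤ ψ₂ → c ∈ ψ₃.support →
      wt φ₁ = wt φ₂ →
      W ψ₁ ψ₂ ψ₃ = w φ₁ φ₂ + W (ψ₁ - φ₁) (ψ₂ - φ₂) (ψ₃ - Finsupp.single c 1)) :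
    ∀ (n : ℕ) (ψ₃ ψ₁ ψ₂ : A →₀ ℕ), wt ψ₃ = n + 1 →
      ((W ψ₁ ψ₂ ψ₃ : ℕ) : ℂ) • D ψ₁ ψ₂ ψ₃ =
        ∑ φ₁ ∈ Finset.Iic ψ₁, ∑ φ₂ ∈ Finset.Iic ψ₂, ∑ c ∈ ψ₃.support,
          ((w φ₁ φ₂ : ℕ) : ℂ) • (D φ₁ φ₂ (Finsupp.single c 1) *
            D (ψ₁ - φ₁) (ψ₂ - φ₂) (ψ₃ - Finsupp.single c 1)) := by
  intro n
  induction n with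
  | zero =>
    intro ψ₃ ψ₁ ψ₂ hwt
    obtain ⟨c, rfl⟩ := wt_eq_one hwt
    have hcmem : c ∈ (Finsupp.single c 1 : A →₀ ℕ).support := by
      rw [Finsupp.support_single_ne_zero c one_ne_zero]; exact Finset.mem_singleton_self c
    rw [Finsupp.support_single_ne_zero c one_ne_zero]
    simp only [Finset.sum_singleton, tsub_self]
    rw [Finset.sum_eq_single ψ₁]
    · rw [Finset.sum_eq_single ψ₂]
      · rw [tsub_self, tsub_self, hD.1, mul_one]
        by_cases hwteq : wt ψ₁ = wt ψ₂
        · have h := hW ψ₁ ψ₂ (Finsupp.single c 1) ψ₁ ψ₂ c le_rfl le_rfl hcmem hwteq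
          rw [tsub_self, tsub_self, tsub_self, hW0] at h
          rw [h, Nat.add_zero]
        · have h0 : D ψ₁ ψ₂ (Finsupp.single c 1) = 0 := by rw [hD.2.2.1, if_neg hwteq]
          rw [h0, smul_zero, smul_zero]
      · intro φ₂ h2m h2ne
        have hz : ¬(ψ₁ - ψ₁ = 0 ∧ ψ₂ - φ₂ = 0) := by
          rintro ⟨-, h0⟩
          exact h2ne (le_antisymm (Finset.mem_Iic.1 h2m) (tsub_eq_zero_iff_le.1 h0))
        rw [hD.2.1 _ _ hz, mul_zero, smul_zero]
      · intro hmem; exact absurd (Finset.mem_Iic.2 le_rfl) hmem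
    · intro φ₁ h1m h1ne
      rw [Finset.sum_eq_zero]
      intro φ₂ _
      have hz : ¬(ψ₁ - φ₁ = 0 ∧ ψ₂ - φ₂ = 0) := by
        rintro ⟨h0, -⟩
        exact h1ne (le_antisymm (Finset.mem_Iic.1 h1m) (tsub_eq_zero_iff_le.1 h0))
      rw [hD.2.1 _ _ hz, mul_zero, smul_zero]
    · intro hmem; exact absurd (Finset.mem_Iic.2 le_rfl) hmem
  | succ k IH =>
    intro ψ₃ ψ₁ ψ₂ hwt
    have hKne : (wt ψ₃ : ℂ) ≠ 0 := by rw [hwt]; exact Nat.cast_ne_zero.2 (by omega)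
    have cancel : ∀ x y : UEA A L, (wt ψ₃ : ℂ) • x = (wt ψ₃ : ℂ) • y → x = y := by
      intro x y hxy
      have h2 := congrArg (fun z => (wt ψ₃ : ℂ)⁻¹ • z) hxy
      simpa [smul_smul, inv_mul_cancel₀ hKne] using h2
    apply cancel
    have hwt1 : ∀ c ∈ ψ₃.support, wt (ψ₃ - Finsupp.single c 1) = k + 1 := by
      intro c hc
      rw [wt_tsub (single_le_of_mem hc), wt_single, hwt]
      omega
    have hS2 : (∑ a ∈ Finset.Iic ψ₁, ∑ b ∈ Finset.Iic ψ₂, ∑ c ∈ ψ₃.support,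
          D a b (Finsupp.single c 1) *
            (((W (ψ₁ - a) (ψ₂ - b) (ψ₃ - Finsupp.single c 1) : ℕ) : ℂ) •
              D (ψ₁ - a) (ψ₂ - b) (ψ₃ - Finsupp.single c 1)))
        = ((k + 1 : ℕ) : ℂ) • ∑ a ∈ Finset.Iic ψ₁, ∑ b ∈ Finset.Iic ψ₂, ∑ c ∈ ψ₃.support,
            ((w a b : ℕ) : ℂ) • (D a b (Finsupp.single c 1) *
              D (ψ₁ - a) (ψ₂ - b) (ψ₃ - Finsupp.single c 1)) := by
      calc (∑ a ∈ Finset.Iic ψ₁, ∑ b ∈ Finset.Iic ψ₂, ∑ c ∈ ψ₃.support,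
          D a b (Finsupp.single c 1) *
            (((W (ψ₁ - a) (ψ₂ - b) (ψ₃ - Finsupp.single c 1) : ℕ) : ℂ) •
              D (ψ₁ - a) (ψ₂ - b) (ψ₃ - Finsupp.single c 1)))
          = ∑ a ∈ Finset.Iic ψ₁, ∑ b ∈ Finset.Iic ψ₂, ∑ c ∈ ψ₃.support,
              ∑ a' ∈ Finset.Iic ψ₁, ∑ b' ∈ Finset.Iic ψ₂, ∑ c' ∈ ψ₃.support,
                if a + a' ≤ ψ₁ ∧ b + b' ≤ ψ₂ ∧
                    Finsupp.single c 1 + Finsupp.single c' 1 ≤ ψ₃ then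
                  ((w a' b' : ℕ) : ℂ) •
                    (D a b (Finsupp.single c 1) * D a' b' (Finsupp.single c' 1) *
                      D (ψ₁ - (a + a')) (ψ₂ - (b + b'))
                        (ψ₃ - (Finsupp.single c 1 + Finsupp.single c' 1)))
                else 0 := by
            refine Finset.sum_congr rfl fun a ha => Finset.sum_congr rfl fun b hb =>
              Finset.sum_congr rfl fun c hc => ?_
            rw [IH (ψ₃ - Finsupp.single c 1) (ψ₁ - a) (ψ₂ - b) (hwt1 c hc)]
            simp only [Finset.mul_sum]
            simp only [mul_smul_comm, ← mul_assoc, tsub_tsub]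
            exact triple_convert (Finset.mem_Iic.1 ha) (Finset.mem_Iic.1 hb) hc
              (fun a' b' c' => ((w a' b' : ℕ) : ℂ) •
                (D a b (Finsupp.single c 1) * D a' b' (Finsupp.single c' 1) *
                  D (ψ₁ - (a + a')) (ψ₂ - (b + b'))
                    (ψ₃ - (Finsupp.single c 1 + Finsupp.single c' 1))))
        _ = ∑ a ∈ Finset.Iic ψ₁, ∑ b ∈ Finset.Iic ψ₂, ∑ c ∈ ψ₃.support,
              ∑ a' ∈ Finset.Iic ψ₁, ∑ b' ∈ Finset.Iic ψ₂, ∑ c' ∈ ψ₃.support,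
                if a + a' ≤ ψ₁ ∧ b + b' ≤ ψ₂ ∧
                    Finsupp.single c 1 + Finsupp.single c' 1 ≤ ψ₃ then
                  ((w a b : ℕ) : ℂ) •
                    (D a' b' (Finsupp.single c' 1) * D a b (Finsupp.single c 1) *
                      D (ψ₁ - (a' + a)) (ψ₂ - (b' + b))
                        (ψ₃ - (Finsupp.single c' 1 + Finsupp.single c 1)))
                else 0 := by
            exact swap6 (Finset.Iic ψ₁) (Finset.Iic ψ₂) ψ₃.support
              (fun a a' => a + a' ≤ ψ₁) (fun b b' => b + b' ≤ ψ₂)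
              (fun c c' => Finsupp.single c 1 + Finsupp.single c' 1 ≤ ψ₃)
              (fun a a' => by show a + a' ≤ ψ₁ ↔ a' + a ≤ ψ₁; rw [add_comm])
              (fun b b' => by show b + b' ≤ ψ₂ ↔ b' + b ≤ ψ₂; rw [add_comm])
              (fun c c' => by
                show Finsupp.single c 1 + Finsupp.single c' 1 ≤ ψ₃ ↔ _
                rw [add_comm])
              (fun a b c a' b' c' => ((w a' b' : ℕ) : ℂ) •
                (D a b (Finsupp.single c 1) * D a' b' (Finsupp.single c' 1) *
                  D (ψ₁ - (a + a')) (ψ₂ - (b + b'))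
                    (ψ₃ - (Finsupp.single c 1 + Finsupp.single c' 1))))
        _ = ∑ a ∈ Finset.Iic ψ₁, ∑ b ∈ Finset.Iic ψ₂, ∑ c ∈ ψ₃.support,
              ∑ a' ∈ Finset.Iic ψ₁, ∑ b' ∈ Finset.Iic ψ₂, ∑ c' ∈ ψ₃.support,
                if a + a' ≤ ψ₁ ∧ b + b' ≤ ψ₂ ∧
                    Finsupp.single c 1 + Finsupp.single c' 1 ≤ ψ₃ then
                  ((w a b : ℕ) : ℂ) •
                    (D a b (Finsupp.single c 1) * D a' b' (Finsupp.single c' 1) *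
                      D (ψ₁ - (a + a')) (ψ₂ - (b + b'))
                        (ψ₃ - (Finsupp.single c 1 + Finsupp.single c' 1)))
                else 0 := by
            refine Finset.sum_congr rfl fun a _ => Finset.sum_congr rfl fun b _ =>
              Finset.sum_congr rfl fun c _ => Finset.sum_congr rfl fun a' _ =>
              Finset.sum_congr rfl fun b' _ => Finset.sum_congr rfl fun c' _ => ?_
            rw [add_comm a' a, add_comm b' b, add_comm (Finsupp.single c' 1),
              (commD v D hD a' b' a b c' c).eq]
        _ = ∑ a ∈ Finset.Iic ψ₁, ∑ b ∈ Finset.Iic ψ₂, ∑ c ∈ ψ₃.support,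
              ∑ a' ∈ Finset.Iic (ψ₁ - a), ∑ b' ∈ Finset.Iic (ψ₂ - b),
                ∑ c' ∈ (ψ₃ - Finsupp.single c 1).support,
                  ((w a b : ℕ) : ℂ) •
                    (D a b (Finsupp.single c 1) * D a' b' (Finsupp.single c' 1) *
                      D (ψ₁ - (a + a')) (ψ₂ - (b + b'))
                        (ψ₃ - (Finsupp.single c 1 + Finsupp.single c' 1))) := by
            refine Finset.sum_congr rfl fun a ha => Finset.sum_congr rfl fun b hb =>
              Finset.sum_congr rfl fun c hc => ?_
            exact (triple_convert (Finset.mem_Iic.1 ha) (Finset.mem_Iic.1 hb) hc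
              (fun a' b' c' => ((w a b : ℕ) : ℂ) •
                (D a b (Finsupp.single c 1) * D a' b' (Finsupp.single c' 1) *
                  D (ψ₁ - (a + a')) (ψ₂ - (b + b'))
                    (ψ₃ - (Finsupp.single c 1 + Finsupp.single c' 1))))).symm
        _ = ∑ a ∈ Finset.Iic ψ₁, ∑ b ∈ Finset.Iic ψ₂, ∑ c ∈ ψ₃.support,
              ((k + 1 : ℕ) : ℂ) • (((w a b : ℕ) : ℂ) • (D a b (Finsupp.single c 1) *
                D (ψ₁ - a) (ψ₂ - b) (ψ₃ - Finsupp.single c 1))) := by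
            refine Finset.sum_congr rfl fun a ha => Finset.sum_congr rfl fun b hb =>
              Finset.sum_congr rfl fun c hc => ?_
            simp only [← tsub_tsub, mul_assoc, ← Finset.smul_sum, ← Finset.mul_sum]
            rw [← rec1 v D hD (ψ₁ - a) (ψ₂ - b) (ψ₃ - Finsupp.single c 1)
              (by rw [hwt1 c hc]; omega)]
            rw [hwt1 c hc, mul_smul_comm, smul_comm]
        _ = ((k + 1 : ℕ) : ℂ) • ∑ a ∈ Finset.Iic ψ₁, ∑ b ∈ Finset.Iic ψ₂, ∑ c ∈ ψ₃.support,
              ((w a b : ℕ) : ℂ) • (D a b (Finsupp.single c 1) *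
                D (ψ₁ - a) (ψ₂ - b) (ψ₃ - Finsupp.single c 1)) := by
            simp only [Finset.smul_sum]
    calc (wt ψ₃ : ℂ) • (((W ψ₁ ψ₂ ψ₃ : ℕ) : ℂ) • D ψ₁ ψ₂ ψ₃)
        = ((W ψ₁ ψ₂ ψ₃ : ℕ) : ℂ) • ((wt ψ₃ : ℂ) • D ψ₁ ψ₂ ψ₃) := smul_comm _ _ _
      _ = ∑ a ∈ Finset.Iic ψ₁, ∑ b ∈ Finset.Iic ψ₂, ∑ c ∈ ψ₃.support,
            ((W ψ₁ ψ₂ ψ₃ : ℕ) : ℂ) • (D a b (Finsupp.single c 1) *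
              D (ψ₁ - a) (ψ₂ - b) (ψ₃ - Finsupp.single c 1)) := by
          rw [rec1 v D hD ψ₁ ψ₂ ψ₃ (by omega)]
          simp only [Finset.smul_sum]
      _ = ∑ a ∈ Finset.Iic ψ₁, ∑ b ∈ Finset.Iic ψ₂, ∑ c ∈ ψ₃.support,
            (((w a b : ℕ) : ℂ) • (D a b (Finsupp.single c 1) *
              D (ψ₁ - a) (ψ₂ - b) (ψ₃ - Finsupp.single c 1)) +
             D a b (Finsupp.single c 1) *
              (((W (ψ₁ - a) (ψ₂ - b) (ψ₃ - Finsupp.single c 1) : ℕ) : ℂ) •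
                D (ψ₁ - a) (ψ₂ - b) (ψ₃ - Finsupp.single c 1))) := by
          refine Finset.sum_congr rfl fun a ha => Finset.sum_congr rfl fun b hb =>
            Finset.sum_congr rfl fun c hc => ?_
          by_cases hwteq : wt a = wt b
          · rw [hW ψ₁ ψ₂ ψ₃ a b c (Finset.mem_Iic.1 ha) (Finset.mem_Iic.1 hb) hc hwteq]
            push_cast
            rw [add_smul, mul_smul_comm]
          · have h0 : D a b (Finsupp.single c 1) = 0 := by rw [hD.2.2.1, if_neg hwteq]
            rw [h0]
            simp
      _ = (∑ a ∈ Finset.Iic ψ₁, ∑ b ∈ Finset.Iic ψ₂, ∑ c ∈ ψ₃.support,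
            ((w a b : ℕ) : ℂ) • (D a b (Finsupp.single c 1) *
              D (ψ₁ - a) (ψ₂ - b) (ψ₃ - Finsupp.single c 1))) +
          ∑ a ∈ Finset.Iic ψ₁, ∑ b ∈ Finset.Iic ψ₂, ∑ c ∈ ψ₃.support,
            D a b (Finsupp.single c 1) *
              (((W (ψ₁ - a) (ψ₂ - b) (ψ₃ - Finsupp.single c 1) : ℕ) : ℂ) •
                D (ψ₁ - a) (ψ₂ - b) (ψ₃ - Finsupp.single c 1)) := by
          simp only [Finset.sum_add_distrib]
      _ = (∑ a ∈ Finset.Iic ψ₁, ∑ b ∈ Finset.Iic ψ₂, ∑ c ∈ ψ₃.support,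
            ((w a b : ℕ) : ℂ) • (D a b (Finsupp.single c 1) *
              D (ψ₁ - a) (ψ₂ - b) (ψ₃ - Finsupp.single c 1))) +
          ((k + 1 : ℕ) : ℂ) • ∑ a ∈ Finset.Iic ψ₁, ∑ b ∈ Finset.Iic ψ₂, ∑ c ∈ ψ₃.support,
            ((w a b : ℕ) : ℂ) • (D a b (Finsupp.single c 1) *
              D (ψ₁ - a) (ψ₂ - b) (ψ₃ - Finsupp.single c 1)) := by
          rw [hS2]
      _ = (wt ψ₃ : ℂ) • ∑ a ∈ Finset.Iic ψ₁, ∑ b ∈ Finset.Iic ψ₂, ∑ c ∈ ψ₃.support,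
            ((w a b : ℕ) : ℂ) • (D a b (Finsupp.single c 1) *
              D (ψ₁ - a) (ψ₂ - b) (ψ₃ - Finsupp.single c 1)) := by
          rw [hwt]
          have hcast : ((k + 1 + 1 : ℕ) : ℂ) = 1 + ((k + 1 : ℕ) : ℂ) := by push_cast; ring
          rw [hcast, add_smul, one_smul]

/-- two recombination identities for `D^±`. -/
theorem D_identities (S : Sl2Data L) (sgn : Bool)
    (D : (A →₀ ℕ) → (A →₀ ℕ) → (A →₀ ℕ) → UEA A L)
    (hD : IsD (if sgn then S.xp else S.xm) D)
    (b : A) (ψ₁ ψ₂ ψ₃ : A →₀ ℕ) (h3 : 1 ≤ wt ψ₃) :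
    (((ψ₂ b : ℕ) : ℂ) • D ψ₁ ψ₂ ψ₃ =
      ∑ φ₁ ∈ Finset.Iic ψ₁, ∑ φ₂ ∈ Finset.Iic ψ₂, ∑ c ∈ ψ₃.support,
        ((φ₂ b : ℕ) : ℂ) •
          (D φ₁ φ₂ (Finsupp.single c 1) *
            D (ψ₁ - φ₁) (ψ₂ - φ₂) (ψ₃ - Finsupp.single c 1))) ∧
    (((wt ψ₂ + wt ψ₃ : ℕ) : ℂ) • D ψ₁ ψ₂ ψ₃ =
      ∑ φ₁ ∈ Finset.Iic ψ₁, ∑ φ₂ ∈ Finset.Iic ψ₂, ∑ c ∈ ψ₃.support,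
        ((wt φ₁ + 1 : ℕ) : ℂ) •
          (D φ₁ φ₂ (Finsupp.single c 1) *
            D (ψ₁ - φ₁) (ψ₂ - φ₂) (ψ₃ - Finsupp.single c 1))) := by
  have hwt3 : 1 ≤ wt ψ₃ := h3
  constructor
  · have h := keyIdentity (if sgn then S.xp else S.xm) D hD
      (fun φ₁ φ₂ => φ₂ b) (fun ψ₁ ψ₂ ψ₃ => ψ₂ b) (by simp)
      (fun χ₁ χ₂ χ₃ φ₁ φ₂ c h1 h2 hc hwteq => by
        have hb : φ₂ b ≤ χ₂ b := Finsupp.le_def.1 h2 b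
        show χ₂ b = φ₂ b + (χ₂ - φ₂) b
        rw [Finsupp.tsub_apply]
        omega)
      (wt ψ₃ - 1) ψ₃ ψ₁ ψ₂ (by omega)
    simpa using h
  · have h := keyIdentity (if sgn then S.xp else S.xm) D hD
      (fun φ₁ φ₂ => wt φ₁ + 1) (fun χ₁ χ₂ χ₃ => wt χ₂ + wt χ₃) (by simp)
      (fun χ₁ χ₂ χ₃ φ₁ φ₂ c h1 h2 hc hwteq => by
        have hb : wt φ₂ ≤ wt χ₂ := wt_le h2
        have hc1 : 1 ≤ wt χ₃ := by
          have := wt_le (single_le_of_mem hc)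
          rwa [wt_single] at this
        show wt χ₂ + wt χ₃ = wt φ₁ + 1 + (wt (χ₂ - φ₂) + wt (χ₃ - Finsupp.single c 1))
        rw [wt_tsub h2, wt_tsub (single_le_of_mem hc), wt_single]
        omega)
      (wt ψ₃ - 1) ψ₃ ψ₁ ψ₂ (by omega)
    simpa using h

end MapAlgebra
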